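/- arXiv:1602.08887 — 2 statements merged into one kernel-verified Lean document; each statement's English description precedes it below -/
import Mathlib

section
/- Let $\nu$ be a Lévy measure on $\mathbb R^d$ (i.e. $\nu(\{0\})=0$ and $\int (1 \wedge |y|^2)\,\nu(dy) < \infty$) satisfying $c(\nu) := \nu(\{y : |y| > 1\}) < \infty$ and $\int_{\{|y|>1\}} |y|^2 e^{2\beta|y|}\, \nu(dy) < \infty$ for some $\beta \ge 0$. Set $\rho(x) = e^{-\beta|x|}$ and define for $\varphi \in C^2_c(\mathbb R^d)$ the operator $\tilde L^2_I \varphi(x) = \int_{\{|y|>1\}} (\varphi(x+y) - \varphi(x))\,\nu(dy)$. Then $\int_{\mathbb R^d} |\tilde L^2_I \varphi(x)|^2 \rho^2(x)\, dx \le c(\nu) \Big(\int_{\{|y|>1\}} |y|^2 e^{2\beta|y|}\,\nu(dy)\Big) \int_{\mathbb R^d} |\nabla \varphi(x)|^2 \rho^2(x)\, dx$. -/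
open MeasureTheory Set ENNReal
set_option maxHeartbeats 1000000

lemma my_lintegral_sq_le {α : Type*} [MeasurableSpace α] (μ : Measure α) {f : α → ℝ≥0∞}
    (hf : AEMeasurable f μ) :
    (∫⁻ a, f a ∂μ) ^ 2 ≤ μ Set.univ * ∫⁻ a, f a ^ 2 ∂μ := by
  have hpq : Real.HolderConjugate 2 2 := by constructor <;> norm_num
  have h := ENNReal.lintegral_mul_le_Lp_mul_Lq μ hpq hf aemeasurable_const (g := fun _ => 1)
  simp only [mul_one, Pi.mul_apply] at h
  have h1 : ∫⁻ _ : α, (1:ℝ≥0∞) ^ (2:ℝ) ∂μ = μ Set.univ := by simp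
  rw [h1] at h
  calc (∫⁻ a, f a ∂μ) ^ 2 ≤ ((∫⁻ a, f a ^ (2:ℝ) ∂μ) ^ (1/2:ℝ) * (μ Set.univ) ^ (1/2:ℝ)) ^ 2 :=
        pow_le_pow_left' h 2
    _ = μ Set.univ * ∫⁻ a, f a ^ 2 ∂μ := by
        rw [mul_pow, ← ENNReal.rpow_natCast (_ ^ (1/2:ℝ)) 2, ← ENNReal.rpow_natCast (_ ^ (1/2:ℝ)) 2,
          ← ENNReal.rpow_mul, ← ENNReal.rpow_mul]
        norm_num
        rw [mul_comm]

lemma my_ftc_bound {d : ℕ} {φ : EuclideanSpace ℝ (Fin d) → ℝ} (hφ : ContDiff ℝ 2 φ)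
    (x y : EuclideanSpace ℝ (Fin d)) :
    |φ (x + y) - φ x| ≤ ∫ t in (0:ℝ)..1, ‖fderiv ℝ φ (x + t • y)‖ * ‖y‖ := by
  have hd : Differentiable ℝ φ := hφ.differentiable (by norm_num)
  have hcf : Continuous (fderiv ℝ φ) := (hφ.fderiv_right (m := 1) (by norm_num)).continuous
  have hline : ∀ t : ℝ, HasDerivAt (fun s : ℝ => x + s • y) y t := by
    intro t
    simpa using ((hasDerivAt_id t).smul_const y).const_add x
  have hg : ∀ t ∈ Set.uIcc (0:ℝ) 1,
      HasDerivAt (fun s : ℝ => φ (x + s • y)) ((fderiv ℝ φ (x + t • y)) y) t := by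
    intro t _
    exact ((hd (x + t • y)).hasFDerivAt.comp_hasDerivAt t (hline t))
  have hcont : Continuous fun t : ℝ => (fderiv ℝ φ (x + t • y)) y := by
    have : Continuous fun t : ℝ => x + t • y := by continuity
    exact ((hcf.comp this).clm_apply continuous_const)
  have hint : IntervalIntegrable (fun t : ℝ => (fderiv ℝ φ (x + t • y)) y) volume 0 1 :=
    hcont.intervalIntegrable 0 1
  have heq : ∫ t in (0:ℝ)..1, (fderiv ℝ φ (x + t • y)) y
      = φ (x + (1:ℝ) • y) - φ (x + (0:ℝ) • y) :=
    intervalIntegral.integral_eq_sub_of_hasDerivAt hg hint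
  simp only [one_smul, zero_smul, add_zero] at heq
  rw [← heq]
  calc |∫ t in (0:ℝ)..1, (fderiv ℝ φ (x + t • y)) y|
      ≤ ∫ t in (0:ℝ)..1, |(fderiv ℝ φ (x + t • y)) y| :=
        intervalIntegral.abs_integral_le_integral_abs (by norm_num)
    _ ≤ ∫ t in (0:ℝ)..1, ‖fderiv ℝ φ (x + t • y)‖ * ‖y‖ := by
        apply intervalIntegral.integral_mono_on (by norm_num) hint.abs
        · exact ((hcf.comp (by continuity)).norm.mul continuous_const).intervalIntegrable 0 1
        · intro t _
          exact (fderiv ℝ φ (x + t • y)).le_opNorm y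

/-- Weighted `L²` bound for the "large jumps" part of the integro-differential operator:
`‖L̃²_I φ‖²_{L²_ρ} ≤ c(ν) (∫_{|y|>1} |y|² e^{2β|y|} ν(dy)) ‖∇φ‖²_{L²_ρ}`. -/
theorem large_jumps_operator_bound
    {d : ℕ} (ν : Measure (EuclideanSpace ℝ (Fin d)))
    (hν0 : ν {0} = 0)
    (hνlevy : ∫⁻ y, ENNReal.ofReal (min 1 (‖y‖ ^ 2)) ∂ν < ⊤)
    (β : ℝ) (hβ : 0 ≤ β)
    (hc : ν {y | 1 < ‖y‖} < ⊤)
    (hmom : ∫⁻ y in {y | 1 < ‖y‖}, ENNReal.ofReal (‖y‖ ^ 2 * Real.exp (2 * β * ‖y‖)) ∂ν < ⊤)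
    (ρ : EuclideanSpace ℝ (Fin d) → ℝ) (hρ : ∀ x, ρ x = Real.exp (-β * ‖x‖))
    (φ : EuclideanSpace ℝ (Fin d) → ℝ) (hφ : ContDiff ℝ 2 φ) (hsupp : HasCompactSupport φ)
    (L2I : EuclideanSpace ℝ (Fin d) → ℝ)
    (hL2I : ∀ x, L2I x = ∫ y in {y | 1 < ‖y‖}, (φ (x + y) - φ x) ∂ν) :
    ∫ x, |L2I x| ^ 2 * ρ x ^ 2
      ≤ (ν {y | 1 < ‖y‖}).toReal
          * (∫ y in {y | 1 < ‖y‖}, ‖y‖ ^ 2 * Real.exp (2 * β * ‖y‖) ∂ν)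
          * ∫ x, ‖fderiv ℝ φ x‖ ^ 2 * ρ x ^ 2 := by
  set S : Set (EuclideanSpace ℝ (Fin d)) := {y | 1 < ‖y‖} with hSdef
  -- basic continuity facts
  have hρc : Continuous ρ := by
    have : ρ = fun x => Real.exp (-β * ‖x‖) := funext hρ
    rw [this]; continuity
  have hρpos : ∀ z, 0 < ρ z := fun z => by rw [hρ]; exact Real.exp_pos _
  have hcf : Continuous (fderiv ℝ φ) := (hφ.fderiv_right (m := 1) (by norm_num)).continuous
  have hu_cont : Continuous fun z => ‖fderiv ℝ φ z‖ ^ 2 * ρ z ^ 2 :=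
    (hcf.norm.pow 2).mul (hρc.pow 2)
  have hu_nonneg : ∀ z : EuclideanSpace ℝ (Fin d),
      0 ≤ ‖fderiv ℝ φ z‖ ^ 2 * ρ z ^ 2 := fun z => by positivity
  have hu_supp : HasCompactSupport fun z => ‖fderiv ℝ φ z‖ ^ 2 * ρ z ^ 2 := by
    have h1 : HasCompactSupport (fderiv ℝ φ) := hsupp.fderiv (𝕜 := ℝ)
    have h2 : HasCompactSupport fun z => ‖fderiv ℝ φ z‖ ^ 2 :=
      h1.comp_left (g := fun v => ‖v‖ ^ 2) (by simp)
    exact h2.mul_right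
  have hu_int : Integrable fun z => ‖fderiv ℝ φ z‖ ^ 2 * ρ z ^ 2 :=
    hu_cont.integrable_of_hasCompactSupport hu_supp
  set J : ℝ≥0∞ := ∫⁻ x, ENNReal.ofReal (‖fderiv ℝ φ x‖ ^ 2 * ρ x ^ 2) with hJ_def
  have hJ_lt : J < ⊤ := by
    have heq : J = ∫⁻ x, (‖(‖fderiv ℝ φ x‖ ^ 2 * ρ x ^ 2 : ℝ)‖₊ : ℝ≥0∞) := by
      refine lintegral_congr fun x => ?_
      exact (Real.enorm_eq_ofReal (hu_nonneg x)).symm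
    rw [heq]
    exact hu_int.2
  haveI : IsFiniteMeasure (ν.restrict S) := ⟨by rwa [Measure.restrict_apply_univ]⟩
  -- Claim A : pointwise bound with the segment integral
  have claimA : ∀ x y : EuclideanSpace ℝ (Fin d),
      ENNReal.ofReal (|φ (x + y) - φ x| ^ 2 * ρ x ^ 2)
        ≤ ENNReal.ofReal (‖y‖ ^ 2 * Real.exp (2 * β * ‖y‖))
            * ∫⁻ t in Set.Ioc (0:ℝ) 1,
                ENNReal.ofReal (‖fderiv ℝ φ (x + t • y)‖ ^ 2 * ρ (x + t • y) ^ 2) := by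
    intro x y
    have hcontline : Continuous fun t : ℝ => x + t • y := continuous_const.add (continuous_id.smul continuous_const)
    -- step 1 : weighted first-order bound
    have step1 : ENNReal.ofReal (|φ (x + y) - φ x| * ρ x)
        ≤ ∫⁻ t in Set.Ioc (0:ℝ) 1,
            ENNReal.ofReal ((‖fderiv ℝ φ (x + t • y)‖ * ρ (x + t • y))
              * (‖y‖ * Real.exp (β * ‖y‖))) := by
      have hftc := my_ftc_bound hφ x y
      have hcontseg : Continuous fun t : ℝ => ‖fderiv ℝ φ (x + t • y)‖ * ‖y‖ :=
        ((hcf.comp hcontline).norm.mul continuous_const)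
      have hmul : |φ (x + y) - φ x| * ρ x
          ≤ ∫ t in Set.Ioc (0:ℝ) 1, (‖fderiv ℝ φ (x + t • y)‖ * ‖y‖ * ρ x) := by
        rw [← intervalIntegral.integral_of_le (by norm_num : (0:ℝ) ≤ 1)]
        have := intervalIntegral.integral_mul_const (a := (0:ℝ)) (b := 1) (μ := volume)
          (r := ρ x) (f := fun t => ‖fderiv ℝ φ (x + t • y)‖ * ‖y‖)
        rw [this]
        exact mul_le_mul_of_nonneg_right hftc (hρpos x).le
      calc ENNReal.ofReal (|φ (x + y) - φ x| * ρ x)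
          ≤ ENNReal.ofReal (∫ t in Set.Ioc (0:ℝ) 1,
              (‖fderiv ℝ φ (x + t • y)‖ * ‖y‖ * ρ x)) := ENNReal.ofReal_le_ofReal hmul
        _ = ∫⁻ t in Set.Ioc (0:ℝ) 1,
              ENNReal.ofReal (‖fderiv ℝ φ (x + t • y)‖ * ‖y‖ * ρ x) := by
            apply ofReal_integral_eq_lintegral_ofReal
            · exact (hcontseg.mul continuous_const).integrableOn_Ioc
            · have hx0 := (hρpos x).le
              exact ae_of_all _ fun t => by positivity
        _ ≤ _ := by
            apply lintegral_mono_ae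
            filter_upwards [ae_restrict_mem measurableSet_Ioc] with t ht
            apply ENNReal.ofReal_le_ofReal
            have hρle : ρ x ≤ ρ (x + t • y) * Real.exp (β * ‖y‖) := by
              rw [hρ, hρ, ← Real.exp_add]
              apply Real.exp_le_exp.2
              have htn : ‖x + t • y‖ ≤ ‖x‖ + ‖y‖ := by
                calc ‖x + t • y‖ ≤ ‖x‖ + ‖t • y‖ := norm_add_le _ _
                  _ ≤ ‖x‖ + ‖y‖ := by
                      rw [norm_smul, Real.norm_eq_abs]
                      have h1 : |t| ≤ 1 := abs_le.2 ⟨by linarith [ht.1], ht.2⟩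
                      nlinarith [norm_nonneg y]
              nlinarith
            calc ‖fderiv ℝ φ (x + t • y)‖ * ‖y‖ * ρ x
                ≤ ‖fderiv ℝ φ (x + t • y)‖ * ‖y‖ * (ρ (x + t • y) * Real.exp (β * ‖y‖)) :=
                  mul_le_mul_of_nonneg_left hρle (by positivity)
              _ = ‖fderiv ℝ φ (x + t • y)‖ * ρ (x + t • y) * (‖y‖ * Real.exp (β * ‖y‖)) := by
                  ring
    -- step 2 : square it and apply Cauchy–Schwarz on (0,1]
    have hmeas_t : AEMeasurable (fun t : ℝ =>
        ENNReal.ofReal ((‖fderiv ℝ φ (x + t • y)‖ * ρ (x + t • y)) * (‖y‖ * Real.exp (β * ‖y‖))))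
        (volume.restrict (Set.Ioc (0:ℝ) 1)) :=
      ((((hcf.comp hcontline).norm.mul (hρc.comp hcontline)).mul
        continuous_const).measurable.ennreal_ofReal).aemeasurable
    have hsq := my_lintegral_sq_le (volume.restrict (Set.Ioc (0:ℝ) 1)) hmeas_t
    have hvol : (volume.restrict (Set.Ioc (0:ℝ) 1)) Set.univ = 1 := by
      rw [Measure.restrict_apply_univ, Real.volume_Ioc]
      norm_num
    rw [hvol, one_mul] at hsq
    have hι : ENNReal.ofReal (|φ (x + y) - φ x| ^ 2 * ρ x ^ 2)
        = ENNReal.ofReal (|φ (x + y) - φ x| * ρ x) ^ 2 := by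
      have hx0 := (hρpos x).le
      rw [← ENNReal.ofReal_pow (by positivity)]
      congr 1
      ring
    rw [hι]
    refine le_trans (le_trans (pow_le_pow_left' step1 2) hsq) (le_of_eq ?_)
    rw [← lintegral_const_mul' _ _ ENNReal.ofReal_ne_top]
    refine lintegral_congr fun t => ?_
    have ht0 := (hρpos (x + t • y)).le
    rw [← ENNReal.ofReal_pow (by positivity), ← ENNReal.ofReal_mul (by positivity)]
    congr 1
    have hexp : Real.exp (β * ‖y‖) ^ 2 = Real.exp (2 * β * ‖y‖) := by
      rw [← Real.exp_nat_mul]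
      ring_nf
    rw [← hexp]
    ring
  -- Claim B : Cauchy–Schwarz in the jump variable
  have hφcont : Continuous φ := hφ.continuous
  have claimB : ∀ x : EuclideanSpace ℝ (Fin d),
      ENNReal.ofReal (|L2I x| ^ 2 * ρ x ^ 2)
        ≤ ν S * ∫⁻ y in S, ENNReal.ofReal (|φ (x + y) - φ x| ^ 2 * ρ x ^ 2) ∂ν := by
    intro x
    have hFc : Continuous fun y : EuclideanSpace ℝ (Fin d) => φ (x + y) - φ x :=
      (hφcont.comp (continuous_const.add continuous_id)).sub continuous_const
    have hF_meas : AEMeasurable (fun y => ENNReal.ofReal |φ (x + y) - φ x|) (ν.restrict S) :=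
      (hFc.abs.measurable.ennreal_ofReal).aemeasurable
    have h1 : ENNReal.ofReal |L2I x| ≤ ∫⁻ y in S, ENNReal.ofReal |φ (x + y) - φ x| ∂ν := by
      rw [hL2I x]
      calc ENNReal.ofReal |∫ y in S, (φ (x + y) - φ x) ∂ν|
          = (‖∫ y in S, (φ (x + y) - φ x) ∂ν‖₊ : ℝ≥0∞) := by
            rw [← Real.enorm_eq_ofReal_abs]; rfl
        _ ≤ ∫⁻ y in S, (‖φ (x + y) - φ x‖₊ : ℝ≥0∞) ∂ν :=
            enorm_integral_le_lintegral_enorm _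
        _ = ∫⁻ y in S, ENNReal.ofReal |φ (x + y) - φ x| ∂ν := by
            refine lintegral_congr fun y => ?_
            rw [← Real.enorm_eq_ofReal_abs]; rfl
    have h2 := my_lintegral_sq_le (ν.restrict S) hF_meas
    rw [Measure.restrict_apply_univ] at h2
    have hx0 := (hρpos x).le
    have hsplit : ENNReal.ofReal (|L2I x| ^ 2 * ρ x ^ 2)
        = ENNReal.ofReal |L2I x| ^ 2 * ENNReal.ofReal (ρ x ^ 2) := by
      rw [← ENNReal.ofReal_pow (abs_nonneg _), ← ENNReal.ofReal_mul (by positivity)]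
    rw [hsplit]
    calc ENNReal.ofReal |L2I x| ^ 2 * ENNReal.ofReal (ρ x ^ 2)
        ≤ (∫⁻ y in S, ENNReal.ofReal |φ (x + y) - φ x| ∂ν) ^ 2 * ENNReal.ofReal (ρ x ^ 2) :=
          mul_le_mul_left (pow_le_pow_left' h1 2) _
      _ ≤ (ν S * ∫⁻ y in S, ENNReal.ofReal |φ (x + y) - φ x| ^ 2 ∂ν)
            * ENNReal.ofReal (ρ x ^ 2) := mul_le_mul_left h2 _
      _ = ν S * ∫⁻ y in S, ENNReal.ofReal (|φ (x + y) - φ x| ^ 2 * ρ x ^ 2) ∂ν := by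
          rw [mul_assoc]
          congr 1
          rw [← lintegral_mul_const' _ _ ENNReal.ofReal_ne_top]
          refine lintegral_congr fun y => ?_
          rw [← ENNReal.ofReal_pow (abs_nonneg _), ← ENNReal.ofReal_mul (by positivity)]
  -- measurability of the joint kernels
  have hcmap : Continuous fun q : (EuclideanSpace ℝ (Fin d) × EuclideanSpace ℝ (Fin d)) × ℝ =>
      q.1.1 + q.2 • q.1.2 :=
    (continuous_fst.comp continuous_fst).add
      (continuous_snd.smul (continuous_snd.comp continuous_fst))
  have hmeasT : Measurable fun p : EuclideanSpace ℝ (Fin d) × EuclideanSpace ℝ (Fin d) =>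
      ∫⁻ t in Set.Ioc (0:ℝ) 1,
        ENNReal.ofReal (‖fderiv ℝ φ (p.1 + t • p.2)‖ ^ 2 * ρ (p.1 + t • p.2) ^ 2) := by
    exact Measurable.lintegral_prod_right'
      (f := fun q : (EuclideanSpace ℝ (Fin d) × EuclideanSpace ℝ (Fin d)) × ℝ =>
        ENNReal.ofReal (‖fderiv ℝ φ (q.1.1 + q.2 • q.1.2)‖ ^ 2 * ρ (q.1.1 + q.2 • q.1.2) ^ 2))
      ((hu_cont.comp hcmap).measurable.ennreal_ofReal)
  have hK_meas : Measurable fun y : EuclideanSpace ℝ (Fin d) =>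
      ENNReal.ofReal (‖y‖ ^ 2 * Real.exp (2 * β * ‖y‖)) :=
    (((continuous_norm.pow 2).mul
      (Real.continuous_exp.comp ((continuous_const.mul continuous_norm)))).measurable).ennreal_ofReal
  -- the main chain of inequalities, in ℝ≥0∞
  have hinner : ∀ y : EuclideanSpace ℝ (Fin d),
      (∫⁻ x, ENNReal.ofReal (‖y‖ ^ 2 * Real.exp (2 * β * ‖y‖))
        * ∫⁻ t in Set.Ioc (0:ℝ) 1,
            ENNReal.ofReal (‖fderiv ℝ φ (x + t • y)‖ ^ 2 * ρ (x + t • y) ^ 2))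
      = ENNReal.ofReal (‖y‖ ^ 2 * Real.exp (2 * β * ‖y‖)) * J := by
    intro y
    rw [lintegral_const_mul' _ _ ENNReal.ofReal_ne_top]
    congr 1
    have hc2 : Continuous fun q : EuclideanSpace ℝ (Fin d) × ℝ => q.1 + q.2 • y :=
      continuous_fst.add (continuous_snd.smul continuous_const)
    have hswap : (∫⁻ x, ∫⁻ t in Set.Ioc (0:ℝ) 1,
        ENNReal.ofReal (‖fderiv ℝ φ (x + t • y)‖ ^ 2 * ρ (x + t • y) ^ 2) ∂volume)
        = ∫⁻ t in Set.Ioc (0:ℝ) 1, ∫⁻ x,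
            ENNReal.ofReal (‖fderiv ℝ φ (x + t • y)‖ ^ 2 * ρ (x + t • y) ^ 2) :=
      lintegral_lintegral_swap (f := fun x t =>
        ENNReal.ofReal (‖fderiv ℝ φ (x + t • y)‖ ^ 2 * ρ (x + t • y) ^ 2))
        ((hu_cont.comp hc2).measurable.ennreal_ofReal).aemeasurable
    rw [hswap]
    have htrans : ∀ t : ℝ, (∫⁻ x,
        ENNReal.ofReal (‖fderiv ℝ φ (x + t • y)‖ ^ 2 * ρ (x + t • y) ^ 2)) = J := fun t =>
      lintegral_add_right_eq_self
        (fun z => ENNReal.ofReal (‖fderiv ℝ φ z‖ ^ 2 * ρ z ^ 2)) (t • y)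
    rw [lintegral_congr htrans, setLIntegral_const, Real.volume_Ioc]
    norm_num
  have hswap1 : (∫⁻ x, ∫⁻ y in S, ENNReal.ofReal (‖y‖ ^ 2 * Real.exp (2 * β * ‖y‖))
        * (∫⁻ t in Set.Ioc (0:ℝ) 1,
            ENNReal.ofReal (‖fderiv ℝ φ (x + t • y)‖ ^ 2 * ρ (x + t • y) ^ 2)) ∂ν)
      = ∫⁻ y in S, (∫⁻ x, ENNReal.ofReal (‖y‖ ^ 2 * Real.exp (2 * β * ‖y‖))
        * ∫⁻ t in Set.Ioc (0:ℝ) 1,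
            ENNReal.ofReal (‖fderiv ℝ φ (x + t • y)‖ ^ 2 * ρ (x + t • y) ^ 2)) ∂ν :=
    lintegral_lintegral_swap (f := fun x y =>
        ENNReal.ofReal (‖y‖ ^ 2 * Real.exp (2 * β * ‖y‖))
        * ∫⁻ t in Set.Ioc (0:ℝ) 1,
            ENNReal.ofReal (‖fderiv ℝ φ (x + t • y)‖ ^ 2 * ρ (x + t • y) ^ 2))
      (((hK_meas.comp measurable_snd).mul
        (hmeasT.comp (measurable_fst.prodMk measurable_snd))).aemeasurable)
  have key : (∫⁻ x, ENNReal.ofReal (|L2I x| ^ 2 * ρ x ^ 2))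
      ≤ ν S * ((∫⁻ y in S, ENNReal.ofReal (‖y‖ ^ 2 * Real.exp (2 * β * ‖y‖)) ∂ν) * J) := by
    calc (∫⁻ x, ENNReal.ofReal (|L2I x| ^ 2 * ρ x ^ 2))
        ≤ ∫⁻ x, ν S * ∫⁻ y in S, ENNReal.ofReal (|φ (x + y) - φ x| ^ 2 * ρ x ^ 2) ∂ν :=
          lintegral_mono claimB
      _ ≤ ∫⁻ x, ν S * ∫⁻ y in S, ENNReal.ofReal (‖y‖ ^ 2 * Real.exp (2 * β * ‖y‖))
            * (∫⁻ t in Set.Ioc (0:ℝ) 1,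
                ENNReal.ofReal (‖fderiv ℝ φ (x + t • y)‖ ^ 2 * ρ (x + t • y) ^ 2)) ∂ν := by
          refine lintegral_mono fun x => mul_le_mul_right (lintegral_mono fun y => ?_) _
          exact claimA x y
      _ = ν S * ∫⁻ x, ∫⁻ y in S, ENNReal.ofReal (‖y‖ ^ 2 * Real.exp (2 * β * ‖y‖))
            * (∫⁻ t in Set.Ioc (0:ℝ) 1,
                ENNReal.ofReal (‖fderiv ℝ φ (x + t • y)‖ ^ 2 * ρ (x + t • y) ^ 2)) ∂ν :=
          lintegral_const_mul' _ _ hc.ne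
      _ = ν S * ∫⁻ y in S, (∫⁻ x, ENNReal.ofReal (‖y‖ ^ 2 * Real.exp (2 * β * ‖y‖))
            * ∫⁻ t in Set.Ioc (0:ℝ) 1,
                ENNReal.ofReal (‖fderiv ℝ φ (x + t • y)‖ ^ 2 * ρ (x + t • y) ^ 2)) ∂ν := by
          rw [hswap1]
      _ = ν S * ∫⁻ y in S, ENNReal.ofReal (‖y‖ ^ 2 * Real.exp (2 * β * ‖y‖)) * J ∂ν := by
          rw [lintegral_congr hinner]
      _ = ν S * ((∫⁻ y in S, ENNReal.ofReal (‖y‖ ^ 2 * Real.exp (2 * β * ‖y‖)) ∂ν) * J) := by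
          rw [lintegral_mul_const' _ _ hJ_lt.ne]
  -- measurability of L2I
  have hL2I_meas : AEStronglyMeasurable L2I volume := by
    have hφcont2 : Continuous fun p : EuclideanSpace ℝ (Fin d) × EuclideanSpace ℝ (Fin d) =>
        φ (p.1 + p.2) - φ p.1 :=
      (hφcont.comp (continuous_fst.add continuous_snd)).sub (hφcont.comp continuous_fst)
    have : StronglyMeasurable fun x => ∫ y in S, (φ (x + y) - φ x) ∂ν :=
      hφcont2.stronglyMeasurable.integral_prod_right'
    have hfun : L2I = fun x => ∫ y in S, (φ (x + y) - φ x) ∂ν := funext hL2I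
    rw [hfun]
    exact this.aestronglyMeasurable
  -- convert Bochner integrals to lower integrals
  have hLHS : ∫ x, |L2I x| ^ 2 * ρ x ^ 2
      = (∫⁻ x, ENNReal.ofReal (|L2I x| ^ 2 * ρ x ^ 2)).toReal := by
    apply integral_eq_lintegral_of_nonneg_ae
    · exact ae_of_all _ fun x => by have := (hρpos x).le; positivity
    · have heq : (fun x => |L2I x| ^ 2 * ρ x ^ 2) = fun x => L2I x ^ 2 * ρ x ^ 2 := by
        funext z; rw [sq_abs]
      rw [heq]
      exact ((hL2I_meas.aemeasurable.pow_const 2).mul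
        ((hρc.pow 2).measurable.aemeasurable)).aestronglyMeasurable
  have hM : ∫ y in S, ‖y‖ ^ 2 * Real.exp (2 * β * ‖y‖) ∂ν
      = (∫⁻ y in S, ENNReal.ofReal (‖y‖ ^ 2 * Real.exp (2 * β * ‖y‖)) ∂ν).toReal := by
    apply integral_eq_lintegral_of_nonneg_ae
    · exact ae_of_all _ fun y => by positivity
    · exact ((continuous_norm.pow 2).mul
        (Real.continuous_exp.comp (continuous_const.mul continuous_norm))).aestronglyMeasurable
  have hI : ∫ x, ‖fderiv ℝ φ x‖ ^ 2 * ρ x ^ 2 = J.toReal :=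
    integral_eq_lintegral_of_nonneg_ae (ae_of_all _ hu_nonneg) hu_cont.aestronglyMeasurable
  rw [hLHS, hM, hI]
  have hfin : ν S * ((∫⁻ y in S, ENNReal.ofReal (‖y‖ ^ 2 * Real.exp (2 * β * ‖y‖)) ∂ν) * J) ≠ ⊤ :=
    ENNReal.mul_ne_top hc.ne (ENNReal.mul_ne_top hmom.ne hJ_lt.ne)
  calc (∫⁻ x, ENNReal.ofReal (|L2I x| ^ 2 * ρ x ^ 2)).toReal
      ≤ (ν S * ((∫⁻ y in S, ENNReal.ofReal (‖y‖ ^ 2 * Real.exp (2 * β * ‖y‖)) ∂ν) * J)).toReal :=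
        ENNReal.toReal_mono hfin key
    _ = (ν S).toReal
          * (∫⁻ y in S, ENNReal.ofReal (‖y‖ ^ 2 * Real.exp (2 * β * ‖y‖)) ∂ν).toReal
          * J.toReal := by
        rw [ENNReal.toReal_mul, ENNReal.toReal_mul]
        ring
end

section
/- Let $\nu$ be a Lévy measure on $\mathbb R^d$ with $\int_{\{|y|>1\}} |y| e^{\beta|y|}\,\nu(dy) < \infty$ for some $\beta \ge 0$, and let $\rho(x) = e^{-\beta|x|}$. For $\varphi, \phi \in C^2_c(\mathbb R^d)$ define $I_1 = \int_{\mathbb R^d}\Big(\int_{\{|y|>1\}} (\varphi(x+y) - \varphi(x))\,\nu(dy)\Big)\phi(x)\rho^2(x)\,dx$. Then $|I_1| \le \sqrt d\, \Big(\int_{\{|y|>1\}} |y| e^{\beta|y|}\,\nu(dy)\Big) \|\nabla\varphi\|_{L^2_\rho}\, \|\phi\|_{L^2_\rho}$, where $\|f\|_{L^2_\rho}^2 = \int |f|^2 \rho^2\,dx$. -/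
open MeasureTheory Set ENNReal

set_option maxHeartbeats 1000000

/-- Bound for the large-jump bilinear term:
`|I₁| ≤ √d (∫_{|y|>1} |y| e^{β|y|} ν(dy)) ‖∇φ‖_{L²_ρ} ‖ϕ‖_{L²_ρ}`. -/
theorem large_jump_bilinear_bound
    {d : ℕ} (ν : Measure (EuclideanSpace ℝ (Fin d)))
    (hν0 : ν {0} = 0)
    (hνlevy : ∫⁻ y, ENNReal.ofReal (min 1 (‖y‖ ^ 2)) ∂ν < ⊤)
    (β : ℝ) (hβ : 0 ≤ β)
    (hmom : ∫⁻ y in {y | 1 < ‖y‖}, ENNReal.ofReal (‖y‖ * Real.exp (β * ‖y‖)) ∂ν < ⊤)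
    (ρ : EuclideanSpace ℝ (Fin d) → ℝ) (hρ : ∀ x, ρ x = Real.exp (-β * ‖x‖))
    (φ ϕ : EuclideanSpace ℝ (Fin d) → ℝ)
    (hφ : ContDiff ℝ 2 φ) (hφsupp : HasCompactSupport φ)
    (hϕ : ContDiff ℝ 2 ϕ) (hϕsupp : HasCompactSupport ϕ)
    (I₁ : ℝ)
    (hI₁ : I₁ = ∫ x, (∫ y in {y | 1 < ‖y‖}, (φ (x + y) - φ x) ∂ν) * ϕ x * ρ x ^ 2) :
    |I₁| ≤ Real.sqrt d * (∫ y in {y | 1 < ‖y‖}, ‖y‖ * Real.exp (β * ‖y‖) ∂ν)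
        * Real.sqrt (∫ x, ‖fderiv ℝ φ x‖ ^ 2 * ρ x ^ 2)
        * Real.sqrt (∫ x, ϕ x ^ 2 * ρ x ^ 2) := by
  obtain rfl : ρ = fun x => Real.exp (-β * ‖x‖) := funext hρ
  -- trivial case `d = 0`
  by_cases hd : d = 0
  · subst hd
    have hsub : Subsingleton (EuclideanSpace ℝ (Fin 0)) := by
      unfold EuclideanSpace PiLp; exact (WithLp.equiv 2 _).subsingleton
    have hI : I₁ = 0 := by
      rw [hI₁]
      have h0 : ∀ x : EuclideanSpace ℝ (Fin 0),
          (∫ y in {y | 1 < ‖y‖}, (φ (x + y) - φ x) ∂ν) * ϕ x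
            * (fun x => Real.exp (-β * ‖x‖)) x ^ 2 = 0 := by
        intro x
        have h1 : ∀ y : EuclideanSpace ℝ (Fin 0), φ (x + y) - φ x = 0 := by
          intro y; rw [Subsingleton.elim (x + y) x]; ring
        simp [h1]
      simp only [h0]
      simp
    rw [hI]
    norm_num
  -- main case: notation
  set ρ : EuclideanSpace ℝ (Fin d) → ℝ := fun x => Real.exp (-β * ‖x‖) with hρdef
  have hρc : Continuous ρ := Real.continuous_exp.comp (continuous_const.mul continuous_norm)
  have hρpos : ∀ x, 0 < ρ x := fun x => Real.exp_pos _
  have hφc : Continuous φ := hφ.continuous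
  have hϕc : Continuous ϕ := hϕ.continuous
  have hDc : Continuous (fderiv ℝ φ) := hφ.continuous_fderiv (by norm_num)
  set s : Set (EuclideanSpace ℝ (Fin d)) := {y | 1 < ‖y‖} with hsdef
  have hsmeas : MeasurableSet s := (isOpen_lt continuous_const continuous_norm).measurableSet
  -- the restricted measure is finite
  have hfin : IsFiniteMeasure (ν.restrict s) := by
    constructor
    rw [Measure.restrict_apply_univ]
    have h1 : ν s = ∫⁻ y in s, 1 ∂ν := by rw [setLIntegral_const, one_mul]
    have h2 : (∫⁻ y in s, 1 ∂ν) ≤ ∫⁻ y in s, ENNReal.ofReal (‖y‖ * Real.exp (β * ‖y‖)) ∂ν := by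
      apply setLIntegral_mono' hsmeas
      intro y hy
      have h1y : (1:ℝ) ≤ ‖y‖ := le_of_lt hy
      have he : (1:ℝ) ≤ Real.exp (β * ‖y‖) := Real.one_le_exp (by positivity)
      have h3 : (1:ℝ) ≤ ‖y‖ * Real.exp (β * ‖y‖) := by nlinarith
      calc (1:ℝ≥0∞) = ENNReal.ofReal 1 := by simp
        _ ≤ _ := ENNReal.ofReal_le_ofReal h3
    exact lt_of_le_of_lt (h1 ▸ h2) hmom
  haveI := hfin
  -- the two L² norms
  set A : ℝ := Real.sqrt (∫ x, ‖fderiv ℝ φ x‖ ^ 2 * ρ x ^ 2) with hAdef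
  set B : ℝ := Real.sqrt (∫ x, ϕ x ^ 2 * ρ x ^ 2) with hBdef
  have hA0 : 0 ≤ A := Real.sqrt_nonneg _
  have hB0 : 0 ≤ B := Real.sqrt_nonneg _
  have hDsupp : HasCompactSupport (fderiv ℝ φ) := hφsupp.fderiv (𝕜 := ℝ)
  have hAint : Integrable (fun x => ‖fderiv ℝ φ x‖ ^ 2 * ρ x ^ 2) := by
    apply Continuous.integrable_of_hasCompactSupport
    · exact ((hDc.norm.pow 2).mul (hρc.pow 2))
    · apply HasCompactSupport.mul_right
      exact (hDsupp.comp_left (g := fun t => ‖t‖ ^ 2) (by simp))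
  have hBint : Integrable (fun x => ϕ x ^ 2 * ρ x ^ 2) := by
    apply Continuous.integrable_of_hasCompactSupport
    · exact ((hϕc.pow 2).mul (hρc.pow 2))
    · apply HasCompactSupport.mul_right
      exact (hϕsupp.comp_left (g := fun t => t ^ 2) (by simp))
  -- lintegral representations of `A` and `B`
  have hFA : (∫⁻ x, ENNReal.ofReal (‖fderiv ℝ φ x‖ * ρ x) ^ (2:ℝ)) ^ ((1:ℝ)/2)
      = ENNReal.ofReal A := by
    have h1 : ∀ x : EuclideanSpace ℝ (Fin d),
        ENNReal.ofReal (‖fderiv ℝ φ x‖ * ρ x) ^ (2:ℝ)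
          = ENNReal.ofReal (‖fderiv ℝ φ x‖ ^ 2 * ρ x ^ 2) := by
      intro x
      rw [show (2:ℝ) = ((2:ℕ):ℝ) by norm_num, ENNReal.rpow_natCast,
        ← ENNReal.ofReal_pow (by positivity)]
      ring_nf
    simp_rw [h1]
    rw [← ofReal_integral_eq_lintegral_ofReal hAint
      (Filter.Eventually.of_forall (fun x => by positivity))]
    have hT0 : 0 ≤ ∫ x, ‖fderiv ℝ φ x‖ ^ 2 * ρ x ^ 2 :=
      integral_nonneg (fun x => by positivity)
    rw [ENNReal.ofReal_rpow_of_nonneg hT0 (by norm_num), hAdef, Real.sqrt_eq_rpow]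
  have hFB : (∫⁻ x, ENNReal.ofReal (|ϕ x| * ρ x) ^ (2:ℝ)) ^ ((1:ℝ)/2)
      = ENNReal.ofReal B := by
    have h1 : ∀ x : EuclideanSpace ℝ (Fin d),
        ENNReal.ofReal (|ϕ x| * ρ x) ^ (2:ℝ)
          = ENNReal.ofReal (ϕ x ^ 2 * ρ x ^ 2) := by
      intro x
      rw [show (2:ℝ) = ((2:ℕ):ℝ) by norm_num, ENNReal.rpow_natCast,
        ← ENNReal.ofReal_pow (by positivity)]
      rw [mul_pow, sq_abs]
    simp_rw [h1]
    rw [← ofReal_integral_eq_lintegral_ofReal hBint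
      (Filter.Eventually.of_forall (fun x => by positivity))]
    have hT0 : 0 ≤ ∫ x, ϕ x ^ 2 * ρ x ^ 2 := integral_nonneg (fun x => by positivity)
    rw [ENNReal.ofReal_rpow_of_nonneg hT0 (by norm_num), hBdef, Real.sqrt_eq_rpow]
  -- Cauchy–Schwarz with translation
  have hCS : ∀ v : EuclideanSpace ℝ (Fin d),
      (∫⁻ x, ENNReal.ofReal (‖fderiv ℝ φ (x + v)‖ * ρ (x + v))
        * ENNReal.ofReal (|ϕ x| * ρ x))
        ≤ ENNReal.ofReal A * ENNReal.ofReal B := by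
    intro v
    have hFm : Measurable fun x : EuclideanSpace ℝ (Fin d) =>
        ENNReal.ofReal (‖fderiv ℝ φ x‖ * ρ x) :=
      ((hDc.norm.mul hρc).measurable).ennreal_ofReal
    have hGm : Measurable fun x : EuclideanSpace ℝ (Fin d) =>
        ENNReal.ofReal (|ϕ x| * ρ x) :=
      ((hϕc.abs.mul hρc).measurable).ennreal_ofReal
    have hpq : Real.HolderConjugate 2 2 := ⟨by norm_num, by norm_num, by norm_num⟩
    have h := ENNReal.lintegral_mul_le_Lp_mul_Lq volume hpq
      ((hFm.comp (measurable_id.add_const v)).aemeasurable) hGm.aemeasurable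
    simp only [Pi.mul_apply, Function.comp, id] at h
    refine le_trans h (le_of_eq ?_)
    rw [show (∫⁻ a, ENNReal.ofReal (‖fderiv ℝ φ (a + v)‖ * ρ (a + v)) ^ (2:ℝ))
        = ∫⁻ a, (fun x => ENNReal.ofReal (‖fderiv ℝ φ x‖ * ρ x) ^ (2:ℝ)) (a + v) from rfl,
      lintegral_add_right_eq_self (fun x => ENNReal.ofReal (‖fderiv ℝ φ x‖ * ρ x) ^ (2:ℝ)) v,
      hFA, hFB]
  -- weight comparison
  have hρb : ∀ (x y : EuclideanSpace ℝ (Fin d)), ∀ t ∈ Ioc (0:ℝ) 1,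
      ρ x ≤ Real.exp (β * ‖y‖) * ρ (x + t • y) := by
    intro x y t ht
    have habs : |t| ≤ 1 := abs_le.2 ⟨by linarith [ht.1], ht.2⟩
    have h1 : ‖x + t • y‖ ≤ ‖x‖ + ‖y‖ := by
      calc ‖x + t • y‖ ≤ ‖x‖ + ‖t • y‖ := norm_add_le _ _
        _ = ‖x‖ + |t| * ‖y‖ := by rw [norm_smul, Real.norm_eq_abs]
        _ ≤ ‖x‖ + 1 * ‖y‖ := by nlinarith [norm_nonneg y]
        _ = ‖x‖ + ‖y‖ := by ring
    have : ρ x = Real.exp (-β * ‖x‖) := rfl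
    rw [this, show ρ (x + t • y) = Real.exp (-β * ‖x + t • y‖) from rfl, ← Real.exp_add]
    apply Real.exp_le_exp.2
    nlinarith
  -- bound of the inner x-integral for fixed t, y
  have hx2 : ∀ (y : EuclideanSpace ℝ (Fin d)) (t : ℝ), t ∈ Ioc (0:ℝ) 1 →
      (∫⁻ x, ENNReal.ofReal (‖fderiv ℝ φ (x + t • y)‖ * (|ϕ x| * ρ x ^ 2)))
        ≤ ENNReal.ofReal (Real.exp (β * ‖y‖)) * (ENNReal.ofReal A * ENNReal.ofReal B) := by
    intro y t ht
    have hpt : ∀ x, ENNReal.ofReal (‖fderiv ℝ φ (x + t • y)‖ * (|ϕ x| * ρ x ^ 2))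
        ≤ ENNReal.ofReal (Real.exp (β * ‖y‖)) *
          (ENNReal.ofReal (‖fderiv ℝ φ (x + t • y)‖ * ρ (x + t • y))
            * ENNReal.ofReal (|ϕ x| * ρ x)) := by
      intro x
      rw [← ENNReal.ofReal_mul (by positivity), ← ENNReal.ofReal_mul (by positivity)]
      apply ENNReal.ofReal_le_ofReal
      have key := hρb x y t ht
      calc ‖fderiv ℝ φ (x + t • y)‖ * (|ϕ x| * ρ x ^ 2)
          = (‖fderiv ℝ φ (x + t • y)‖ * |ϕ x| * ρ x) * ρ x := by ring
        _ ≤ (‖fderiv ℝ φ (x + t • y)‖ * |ϕ x| * ρ x)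
            * (Real.exp (β * ‖y‖) * ρ (x + t • y)) := by
            apply mul_le_mul_of_nonneg_left key
            positivity
        _ = Real.exp (β * ‖y‖) * (‖fderiv ℝ φ (x + t • y)‖ * ρ (x + t • y)
            * (|ϕ x| * ρ x)) := by ring
    calc (∫⁻ x, ENNReal.ofReal (‖fderiv ℝ φ (x + t • y)‖ * (|ϕ x| * ρ x ^ 2)))
        ≤ ∫⁻ x, ENNReal.ofReal (Real.exp (β * ‖y‖)) *
            (ENNReal.ofReal (‖fderiv ℝ φ (x + t • y)‖ * ρ (x + t • y))
              * ENNReal.ofReal (|ϕ x| * ρ x)) := lintegral_mono hpt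
      _ = ENNReal.ofReal (Real.exp (β * ‖y‖)) *
            ∫⁻ x, ENNReal.ofReal (‖fderiv ℝ φ (x + t • y)‖ * ρ (x + t • y))
              * ENNReal.ofReal (|ϕ x| * ρ x) := lintegral_const_mul' _ _ ofReal_ne_top
      _ ≤ _ := mul_le_mul_right (hCS (t • y)) _
  -- FTC bound
  have hFTC : ∀ x y : EuclideanSpace ℝ (Fin d),
      |φ (x + y) - φ x| ≤ ∫ t in Ioc (0:ℝ) 1, ‖fderiv ℝ φ (x + t • y)‖ * ‖y‖ := by
    intro x y
    have hcont : Continuous (fun t : ℝ => x + t • y) :=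
      continuous_const.add (continuous_id.smul continuous_const)
    have key : φ (x + y) - φ x = ∫ t in (0:ℝ)..1, (fderiv ℝ φ (x + t • y)) y := by
      have hderiv : ∀ t ∈ Set.uIcc (0:ℝ) 1,
          HasDerivAt (fun u : ℝ => φ (x + u • y)) ((fderiv ℝ φ (x + t • y)) y) t := by
        intro t _
        have h1 : HasDerivAt (fun u : ℝ => x + u • y) y t := by
          simpa using ((hasDerivAt_id t).smul_const y).const_add x
        exact ((hφ.differentiable (by norm_num)).differentiableAt.hasFDerivAt.comp_hasDerivAt t h1)
      have hint : IntervalIntegrable (fun t : ℝ => (fderiv ℝ φ (x + t • y)) y) volume 0 1 :=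
        ((hDc.comp hcont).clm_apply continuous_const).intervalIntegrable 0 1
      have h := intervalIntegral.integral_eq_sub_of_hasDerivAt hderiv hint
      rw [h]; simp
    rw [key, ← Real.norm_eq_abs, ← intervalIntegral.integral_of_le zero_le_one]
    refine le_trans (intervalIntegral.norm_integral_le_of_norm_le zero_le_one ?_ ?_)
      le_rfl
    · filter_upwards with t _
      exact ((fderiv ℝ φ (x + t • y)).le_opNorm y)
    · exact (((hDc.comp hcont).norm).mul continuous_const).intervalIntegrable 0 1
  -- bound of the x-integral for fixed y
  have hy : ∀ y : EuclideanSpace ℝ (Fin d),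
      (∫⁻ x, ENNReal.ofReal (|φ (x + y) - φ x| * (|ϕ x| * ρ x ^ 2)))
        ≤ ENNReal.ofReal (‖y‖ * Real.exp (β * ‖y‖))
          * (ENNReal.ofReal A * ENNReal.ofReal B) := by
    intro y
    have hstep : ∀ x, ENNReal.ofReal (|φ (x + y) - φ x| * (|ϕ x| * ρ x ^ 2))
        ≤ ∫⁻ t in Ioc (0:ℝ) 1,
            ENNReal.ofReal ((‖fderiv ℝ φ (x + t • y)‖ * ‖y‖) * (|ϕ x| * ρ x ^ 2)) := by
      intro x
      have hic : Continuous fun t : ℝ => ‖fderiv ℝ φ (x + t • y)‖ * ‖y‖ := by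
        have hcont : Continuous (fun t : ℝ => x + t • y) :=
      continuous_const.add (continuous_id.smul continuous_const)
        exact (hDc.comp hcont).norm.mul continuous_const
      have hint : IntegrableOn (fun t : ℝ => ‖fderiv ℝ φ (x + t • y)‖ * ‖y‖)
          (Ioc (0:ℝ) 1) volume :=
        hic.integrableOn_Ioc
      have h1 : ENNReal.ofReal (|φ (x + y) - φ x| * (|ϕ x| * ρ x ^ 2))
          ≤ ENNReal.ofReal ((∫ t in Ioc (0:ℝ) 1, ‖fderiv ℝ φ (x + t • y)‖ * ‖y‖)
            * (|ϕ x| * ρ x ^ 2)) :=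
        ENNReal.ofReal_le_ofReal (mul_le_mul_of_nonneg_right (hFTC x y) (by positivity))
      refine h1.trans (le_of_eq ?_)
      rw [ENNReal.ofReal_mul (setIntegral_nonneg measurableSet_Ioc (fun t _ => by positivity))]
      rw [ofReal_integral_eq_lintegral_ofReal hint
        (Filter.Eventually.of_forall (fun t => by positivity))]
      rw [← lintegral_mul_const'' _ ((hic.measurable.ennreal_ofReal).aemeasurable.restrict)]
      congr 1
      funext t
      rw [← ENNReal.ofReal_mul (by positivity)]
    have hmeas : AEMeasurable (Function.uncurry fun (x : EuclideanSpace ℝ (Fin d)) (t : ℝ) =>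
        ENNReal.ofReal ((‖fderiv ℝ φ (x + t • y)‖ * ‖y‖) * (|ϕ x| * ρ x ^ 2)))
        (volume.prod (volume.restrict (Ioc (0:ℝ) 1))) := by
      apply Measurable.aemeasurable
      apply Measurable.ennreal_ofReal
      apply Continuous.measurable
      have hc1 : Continuous fun p : EuclideanSpace ℝ (Fin d) × ℝ => p.1 + p.2 • y :=
        continuous_fst.add (continuous_snd.smul continuous_const)
      exact (((hDc.comp hc1).norm.mul continuous_const).mul
        ((hϕc.comp continuous_fst).abs.mul ((hρc.comp continuous_fst).pow 2)))
    calc (∫⁻ x, ENNReal.ofReal (|φ (x + y) - φ x| * (|ϕ x| * ρ x ^ 2)))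
        ≤ ∫⁻ x, ∫⁻ t in Ioc (0:ℝ) 1,
            ENNReal.ofReal ((‖fderiv ℝ φ (x + t • y)‖ * ‖y‖) * (|ϕ x| * ρ x ^ 2)) :=
          lintegral_mono hstep
      _ = ∫⁻ t in Ioc (0:ℝ) 1, ∫⁻ x,
            ENNReal.ofReal ((‖fderiv ℝ φ (x + t • y)‖ * ‖y‖) * (|ϕ x| * ρ x ^ 2)) :=
          lintegral_lintegral_swap hmeas
      _ ≤ ∫⁻ _ in Ioc (0:ℝ) 1, ENNReal.ofReal (‖y‖ * Real.exp (β * ‖y‖))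
            * (ENNReal.ofReal A * ENNReal.ofReal B) := by
          apply lintegral_mono_ae
          filter_upwards [ae_restrict_mem measurableSet_Ioc] with t ht
          have harr : ∀ x, ENNReal.ofReal ((‖fderiv ℝ φ (x + t • y)‖ * ‖y‖) * (|ϕ x| * ρ x ^ 2))
              = ENNReal.ofReal ‖y‖
                * ENNReal.ofReal (‖fderiv ℝ φ (x + t • y)‖ * (|ϕ x| * ρ x ^ 2)) := by
            intro x
            rw [← ENNReal.ofReal_mul (norm_nonneg y)]
            congr 1
            ring
          simp_rw [harr]
          rw [lintegral_const_mul' _ _ ofReal_ne_top]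
          calc ENNReal.ofReal ‖y‖
              * ∫⁻ x, ENNReal.ofReal (‖fderiv ℝ φ (x + t • y)‖ * (|ϕ x| * ρ x ^ 2))
              ≤ ENNReal.ofReal ‖y‖ * (ENNReal.ofReal (Real.exp (β * ‖y‖))
                * (ENNReal.ofReal A * ENNReal.ofReal B)) :=
              mul_le_mul_right (hx2 y t ht) _
            _ = ENNReal.ofReal (‖y‖ * Real.exp (β * ‖y‖))
                * (ENNReal.ofReal A * ENNReal.ofReal B) := by
              rw [ENNReal.ofReal_mul (norm_nonneg y), mul_assoc]
      _ = ENNReal.ofReal (‖y‖ * Real.exp (β * ‖y‖))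
            * (ENNReal.ofReal A * ENNReal.ofReal B) := by
          rw [setLIntegral_const, Real.volume_Ioc]
          norm_num
  -- main estimate in ℝ≥0∞
  have hAEy : ∀ x : EuclideanSpace ℝ (Fin d),
      AEMeasurable (fun y => ENNReal.ofReal (|φ (x + y) - φ x| * (|ϕ x| * ρ x ^ 2)))
        (ν.restrict s) := by
    intro x
    apply Measurable.aemeasurable
    apply Measurable.ennreal_ofReal
    apply Continuous.measurable
    exact (((hφc.comp (continuous_const.add continuous_id)).sub continuous_const).abs.mul
      continuous_const)
  have hptx : ∀ x : EuclideanSpace ℝ (Fin d),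
      ENNReal.ofReal (|(∫ y in s, (φ (x + y) - φ x) ∂ν) * ϕ x * ρ x ^ 2|)
        ≤ ∫⁻ y in s, ENNReal.ofReal (|φ (x + y) - φ x| * (|ϕ x| * ρ x ^ 2)) ∂ν := by
    intro x
    have h1 : |(∫ y in s, (φ (x + y) - φ x) ∂ν) * ϕ x * ρ x ^ 2|
        = |∫ y in s, (φ (x + y) - φ x) ∂ν| * (|ϕ x| * ρ x ^ 2) := by
      rw [abs_mul, abs_mul, abs_of_nonneg (by positivity : (0:ℝ) ≤ ρ x ^ 2), mul_assoc]
    rw [h1, ENNReal.ofReal_mul (abs_nonneg _)]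
    have h2 : ENNReal.ofReal (|∫ y in s, (φ (x + y) - φ x) ∂ν|)
        ≤ ∫⁻ y in s, ENNReal.ofReal (|φ (x + y) - φ x|) ∂ν := by
      rw [← Real.enorm_eq_ofReal_abs]
      refine le_trans (enorm_integral_le_lintegral_enorm _) (le_of_eq ?_)
      congr 1
      funext y
      rw [Real.enorm_eq_ofReal_abs]
    calc ENNReal.ofReal (|∫ y in s, (φ (x + y) - φ x) ∂ν|) * ENNReal.ofReal (|ϕ x| * ρ x ^ 2)
        ≤ (∫⁻ y in s, ENNReal.ofReal (|φ (x + y) - φ x|) ∂ν)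
          * ENNReal.ofReal (|ϕ x| * ρ x ^ 2) := mul_le_mul_left h2 _
      _ = ∫⁻ y in s, ENNReal.ofReal (|φ (x + y) - φ x|)
            * ENNReal.ofReal (|ϕ x| * ρ x ^ 2) ∂ν := by
          rw [lintegral_mul_const'' _ (by
            apply Measurable.aemeasurable
            apply Measurable.ennreal_ofReal
            exact (((hφc.comp (continuous_const.add continuous_id)).sub
              continuous_const).abs).measurable)]
      _ = _ := by
          congr 1
          funext y
          rw [← ENNReal.ofReal_mul (abs_nonneg _)]
  have hmeas2 : AEMeasurable (Function.uncurry fun (x y : EuclideanSpace ℝ (Fin d)) =>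
      ENNReal.ofReal (|φ (x + y) - φ x| * (|ϕ x| * ρ x ^ 2)))
      (volume.prod (ν.restrict s)) := by
    apply Measurable.aemeasurable
    apply Measurable.ennreal_ofReal
    apply Continuous.measurable
    exact ((((hφc.comp (continuous_fst.add continuous_snd)).sub
      (hφc.comp continuous_fst)).abs).mul
      (((hϕc.comp continuous_fst).abs).mul ((hρc.comp continuous_fst).pow 2)))
  set L : ℝ≥0∞ := ∫⁻ y in s, ENNReal.ofReal (‖y‖ * Real.exp (β * ‖y‖)) ∂ν with hLdef
  have hmain : ENNReal.ofReal |I₁| ≤ L * (ENNReal.ofReal A * ENNReal.ofReal B) := by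
    rw [hI₁]
    calc ENNReal.ofReal |∫ x, (∫ y in s, (φ (x + y) - φ x) ∂ν) * ϕ x * ρ x ^ 2|
        = ↑‖∫ x, (∫ y in s, (φ (x + y) - φ x) ∂ν) * ϕ x * ρ x ^ 2‖₊ :=
          (Real.enorm_eq_ofReal_abs _).symm
      _ ≤ ∫⁻ x, ↑‖(∫ y in s, (φ (x + y) - φ x) ∂ν) * ϕ x * ρ x ^ 2‖₊ :=
          enorm_integral_le_lintegral_enorm _
      _ = ∫⁻ x, ENNReal.ofReal (|(∫ y in s, (φ (x + y) - φ x) ∂ν) * ϕ x * ρ x ^ 2|) := by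
          congr 1
          funext x
          rw [← enorm_eq_nnnorm, Real.enorm_eq_ofReal_abs]
      _ ≤ ∫⁻ x, ∫⁻ y in s, ENNReal.ofReal (|φ (x + y) - φ x| * (|ϕ x| * ρ x ^ 2)) ∂ν :=
          lintegral_mono hptx
      _ = ∫⁻ y in s, ∫⁻ x, ENNReal.ofReal (|φ (x + y) - φ x| * (|ϕ x| * ρ x ^ 2)) ∂(volume) ∂ν :=
          lintegral_lintegral_swap hmeas2
      _ ≤ ∫⁻ y in s, ENNReal.ofReal (‖y‖ * Real.exp (β * ‖y‖))
            * (ENNReal.ofReal A * ENNReal.ofReal B) ∂ν :=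
          lintegral_mono (fun y => hy y)
      _ = L * (ENNReal.ofReal A * ENNReal.ofReal B) := by
          rw [hLdef]
          rw [lintegral_mul_const'' _ (by
            apply Measurable.aemeasurable
            apply Measurable.ennreal_ofReal
            exact (continuous_norm.mul (Real.continuous_exp.comp
              (continuous_const.mul continuous_norm))).measurable)]
  -- identify `L` with the real moment integral
  set M : ℝ := ∫ y in s, ‖y‖ * Real.exp (β * ‖y‖) ∂ν with hMdef
  have hMcont : Continuous fun y : EuclideanSpace ℝ (Fin d) => ‖y‖ * Real.exp (β * ‖y‖) :=
    continuous_norm.mul (Real.continuous_exp.comp (continuous_const.mul continuous_norm))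
  have hMint : Integrable (fun y => ‖y‖ * Real.exp (β * ‖y‖)) (ν.restrict s) := by
    refine ⟨hMcont.aestronglyMeasurable, ?_⟩
    rw [hasFiniteIntegral_iff_ofReal (Filter.Eventually.of_forall (fun y => by positivity))]
    exact hmom
  have hM0 : 0 ≤ M := integral_nonneg (fun y => by positivity)
  have hLM : L = ENNReal.ofReal M := by
    rw [hMdef, ofReal_integral_eq_lintegral_ofReal hMint
      (Filter.Eventually.of_forall (fun y => by positivity))]
  -- conclude in ℝ
  have hreal : |I₁| ≤ M * (A * B) := by
    rw [← ENNReal.ofReal_le_ofReal_iff (by positivity)]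
    calc ENNReal.ofReal |I₁| ≤ L * (ENNReal.ofReal A * ENNReal.ofReal B) := hmain
      _ = ENNReal.ofReal (M * (A * B)) := by
        rw [hLM, ← ENNReal.ofReal_mul hA0, ← ENNReal.ofReal_mul hM0]
  have hd1 : (1:ℝ) ≤ Real.sqrt d := by
    rw [Real.one_le_sqrt]
    exact_mod_cast Nat.one_le_iff_ne_zero.2 hd
  calc |I₁| ≤ M * (A * B) := hreal
    _ = 1 * (M * (A * B)) := by ring
    _ ≤ Real.sqrt d * (M * (A * B)) :=
      mul_le_mul_of_nonneg_right hd1 (by positivity)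
    _ = Real.sqrt d * M * A * B := by ring
end
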